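/- Let q > 1 be a real number, n ≥ 1 an integer, and h an integer with 0 ≤ h ≤ n. Define x_i = (-q)^{n+1-i} for 1 ≤ i ≤ n, x_i = (-q)^{i-2n-1} for n+1 ≤ i ≤ 2n, and x_{2n+1} = 1; define α_{i,h} = (-q)^{(n+1-i)(2n-h)} for 1 ≤ i ≤ n, α_{i,h} = (-q)^{(2n+1-i)(2n+h)} for n+1 ≤ i ≤ 2n, and α_{2n+1,h} = 1. Let 𝔅 be the (2n+1)×(2n+1) real matrix whose i-th row (1 ≤ i ≤ 2n+1) is (m_{i,0}, …, m_{i,n-1}, n_{i,0}, …, n_{i,n-1}, m_{i,n}), where m_{i,t} = (-q)^{(n-t)(i-(2n-h+1)) - 2t(2n-h)} and n_{i,t} = q^{-(2n-h)^2 + h^2} · (-q)^{-(n-t)(i-(2n-h+1)) - 2th}. Then 𝔅 is invertible, and if c ∈ ℝ^{2n+1} is the unique vector satisfying 𝔅c = (-q)^{-2n(2n-h)} · b where b_j = j - (2n-h+1) for 1 ≤ j ≤ 2n+1, then for every 1 ≤ i ≤ 2n the i-th component of c equals α_{i,h}^{-1} · (∏_{1 ≤ m ≤ 2n, m ≠ i}(1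 - x_m)) / (∏_{1 ≤ m ≤ 2n+1, m ≠ i}(x_m - x_i)). -/

import Mathlib

/- Proposition 2.7: explicit formula for the first 2n components of the solution of the
linear system 𝔅c = (-q)^{-2n(2n-h)}·b. -/

open Polynomial Finset

/- ===== auxiliary interpolation lemmas ===== -/

lemma derivative_finset_prod {R : Type*} [CommSemiring R] {ι : Type*} [DecidableEq ι]
    (t : Finset ι) (f : ι → R[X]) :
    derivative (∏ j ∈ t, f j) = ∑ j ∈ t, (∏ m ∈ t.erase j, f m) * derivative (f j) := by
  induction t using Finset.induction_on with
  | empty => simp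
  | @insert a t ha ih =>
    rw [Finset.prod_insert ha, derivative_mul, ih, Finset.sum_insert ha,
      Finset.erase_insert ha, Finset.mul_sum]
    have : ∀ j ∈ t, (∏ m ∈ (insert a t).erase j, f m) * derivative (f j)
        = f a * ((∏ m ∈ t.erase j, f m) * derivative (f j)) := by
      intro j hj
      rw [Finset.erase_insert_of_ne (by rintro rfl; exact ha hj),
        Finset.prod_insert (fun hm => ha (Finset.mem_of_mem_erase hm)), mul_assoc]
    rw [Finset.sum_congr rfl this]
    ring

section Interp
variable {F : Type*} [Field F]

lemma deriv_basis_eval (s : Finset ℕ) (v : ℕ → F) (i : ℕ) (z : F) :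
    (Lagrange.basis s v i).derivative.eval z =
      ∑ j ∈ s.erase i, (∏ m ∈ (s.erase i).erase j, ((v i - v m)⁻¹ * (z - v m))) * (v i - v j)⁻¹ := by
  rw [Lagrange.basis, derivative_finset_prod, Polynomial.eval_finset_sum]
  refine Finset.sum_congr rfl fun j hj => ?_
  rw [Polynomial.eval_mul, Polynomial.eval_prod]
  congr 1
  · refine Finset.prod_congr rfl fun m hm => ?_
    simp [Lagrange.basisDivisor]
  · simp [Lagrange.basisDivisor]

lemma sum_pow_mul_deriv (s : Finset ℕ) (v : ℕ → F) (hinj : Set.InjOn v s)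
    (s' : ℕ) (hs' : s' < s.card) :
    ∑ i ∈ s, (v i) ^ s' * (Lagrange.basis s v i).derivative.eval (1 : F)
      = (s' : F) := by
  have hdeg : (X ^ s' : F[X]).degree < s.card := by
    rw [Polynomial.degree_X_pow]; exact_mod_cast hs'
  have h := Lagrange.eq_interpolate (f := (X ^ s' : F[X])) hinj hdeg
  have h2 := congrArg (fun p : F[X] => p.derivative.eval 1) h
  simp only [Lagrange.interpolate_apply] at h2
  rw [Polynomial.derivative_X_pow, Polynomial.eval_mul, Polynomial.eval_C,
    Polynomial.eval_pow, Polynomial.eval_X, one_pow, mul_one] at h2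
  rw [Polynomial.derivative_sum, Polynomial.eval_finset_sum] at h2
  rw [h2]
  refine Finset.sum_congr rfl fun i hi => ?_
  simp [Polynomial.derivative_C_mul]
  left
  rw [← Polynomial.C_pow, Polynomial.derivative_C, Polynomial.eval_zero]

lemma deriv_basis_eval_one (s : Finset ℕ) (v : ℕ → F)
    {i₀ : ℕ} (hi₀ : i₀ ∈ s) (hv₀ : v i₀ = 1) {i : ℕ} (hne : i ≠ i₀) :
    (Lagrange.basis s v i).derivative.eval (1 : F) =
      (∏ m ∈ (s.erase i).erase i₀, (1 - v m)) / (∏ j ∈ s.erase i, (v i - v j)) := by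
  have hi₀' : i₀ ∈ s.erase i := Finset.mem_erase.mpr ⟨Ne.symm hne, hi₀⟩
  rw [deriv_basis_eval]
  rw [Finset.sum_eq_single i₀ ?_ (fun habs => absurd hi₀' habs)]
  · rw [Finset.prod_mul_distrib, Finset.prod_inv_distrib]
    rw [div_eq_mul_inv, ← Finset.mul_prod_erase _ _ hi₀', hv₀, mul_inv]
    ring
  · intro j hj hjne
    apply mul_eq_zero_of_left
    refine Finset.prod_eq_zero (Finset.mem_erase.mpr ⟨hjne.symm, hi₀'⟩) ?_
    rw [hv₀, sub_self, mul_zero]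
end Interp

/- ===== zpow utilities ===== -/

section ZP
variable {q : ℝ}

lemma neg_q_ne_zero (hq : 1 < q) : (-q) ≠ 0 := by
  intro h; nlinarith [neg_eq_zero.mp h]

lemma q_zpow_even (hq : 1 < q) (a : ℤ) : q ^ (2*a) = (-q) ^ (2*a) := by
  rw [zpow_mul, zpow_mul]
  congr 1
  rw [zpow_two, zpow_two]; ring

lemma zpow_neg_q_inj (hq : 1 < q) {a b : ℤ} (hab : (-q)^a = (-q)^b) : a = b := by
  have h0 : 0 < q := lt_trans one_pos hq
  have h2 : q ^ (2*a) = q ^ (2*b) := by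
    rw [q_zpow_even hq, q_zpow_even hq, two_mul, two_mul,
      zpow_add₀ (neg_q_ne_zero hq), zpow_add₀ (neg_q_ne_zero hq), hab]
  have := zpow_right_injective₀ h0 (ne_of_gt hq) h2
  omega

end ZP

/- ===== given definitions (verbatim) ===== -/

/-- The nodes x_1, …, x_{2n+1} (argument `i` is the 1-based index). -/
noncomputable def xNode (q : ℝ) (n : ℕ) (i : ℕ) : ℝ :=
  if i ≤ n then (-q) ^ ((n : ℤ) + 1 - (i : ℤ))
  else if i ≤ 2 * n then (-q) ^ ((i : ℤ) - 2 * (n : ℤ) - 1)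
  else 1

/-- The constants α_{i,h} (argument `i` is the 1-based index). -/
noncomputable def alphaC (q : ℝ) (n h : ℕ) (i : ℕ) : ℝ :=
  if i ≤ n then (-q) ^ (((n : ℤ) + 1 - (i : ℤ)) * (2 * (n : ℤ) - (h : ℤ)))
  else if i ≤ 2 * n then (-q) ^ ((2 * (n : ℤ) + 1 - (i : ℤ)) * (2 * (n : ℤ) + (h : ℤ)))
  else 1

/-- The entries m_{i,t} (with `i` the 1-based row index). -/
noncomputable def mEnt (q : ℝ) (n h : ℕ) (i t : ℕ) : ℝ :=
  (-q) ^ (((n : ℤ) - (t : ℤ)) * ((i : ℤ) - (2 * (n : ℤ) - (h : ℤ) + 1))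
      - 2 * (t : ℤ) * (2 * (n : ℤ) - (h : ℤ)))

/-- The entries n_{i,t} (with `i` the 1-based row index). -/
noncomputable def nEnt (q : ℝ) (n h : ℕ) (i t : ℕ) : ℝ :=
  q ^ (-(2 * (n : ℤ) - (h : ℤ)) ^ 2 + (h : ℤ) ^ 2) *
    (-q) ^ (-((n : ℤ) - (t : ℤ)) * ((i : ℤ) - (2 * (n : ℤ) - (h : ℤ) + 1))
      - 2 * (t : ℤ) * (h : ℤ))

/-- The matrix 𝔅, whose i-th row is (m_{i,0},…,m_{i,n-1}, n_{i,0},…,n_{i,n-1}, m_{i,n}). -/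
noncomputable def BB (q : ℝ) (n h : ℕ) : Matrix (Fin (2 * n + 1)) (Fin (2 * n + 1)) ℝ :=
  Matrix.of fun i j =>
    if (j : ℕ) < n then mEnt q n h ((i : ℕ) + 1) (j : ℕ)
    else if (j : ℕ) < 2 * n then nEnt q n h ((i : ℕ) + 1) ((j : ℕ) - n)
    else mEnt q n h ((i : ℕ) + 1) n

/- ===== node lemmas ===== -/

def fE (n : ℕ) (m : ℕ) : ℤ :=
  if m ≤ n then (n : ℤ) + 1 - m else if m ≤ 2*n then (m : ℤ) - 2*n - 1 else 0

lemma xNode_eq (q : ℝ) (n m : ℕ) : xNode q n m = (-q) ^ (fE n m) := by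
  unfold xNode fE
  split_ifs with h1 h2
  · rfl
  · rfl
  · rw [zpow_zero]

lemma fE_injOn (n : ℕ) : ∀ a ∈ Finset.Icc 1 (2*n+1), ∀ b ∈ Finset.Icc 1 (2*n+1),
    fE n a = fE n b → a = b := by
  intro a ha b hb hab
  simp only [Finset.mem_Icc] at ha hb
  unfold fE at hab
  split_ifs at hab <;> omega

lemma xNode_injOn {q : ℝ} (hq : 1 < q) (n : ℕ) :
    Set.InjOn (xNode q n) (Finset.Icc 1 (2*n+1)) := by
  intro a ha b hb hab
  rw [xNode_eq, xNode_eq] at hab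
  exact fE_injOn n a (by simpa using ha) b (by simpa using hb) (zpow_neg_q_inj hq hab)

/- ===== determinant / invertibility ===== -/

section Det
variable {q : ℝ} (n h : ℕ)

noncomputable def Yrow (q : ℝ) (n h : ℕ) : Fin (2*n+1) → ℝ :=
  fun i => (-q) ^ ((i:ℤ) + h - 2*n)

noncomputable def dCol (q : ℝ) (n h : ℕ) : Fin (2*n+1) → ℝ :=
  fun j => if (j:ℕ) < n then (-q)^(-2*(j:ℤ)*(2*(n:ℤ)-h))
    else if (j:ℕ) < 2*n then q^(-(2*(n:ℤ)-(h:ℤ))^2 + (h:ℤ)^2) * (-q)^(-2*((j:ℤ)-n)*h)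
    else (-q)^(-2*(n:ℤ)*(2*(n:ℤ)-h))

def pFun (n : ℕ) : Fin (2*n+1) → Fin (2*n+1) :=
  fun j => if (j:ℕ) < n then ⟨2*n - j, by omega⟩
    else if (j:ℕ) < 2*n then ⟨(j:ℕ) - n, by omega⟩ else ⟨n, by omega⟩

lemma pFun_inj (n : ℕ) : Function.Injective (pFun n) := by
  intro a b hab
  have h1 := congrArg Fin.val hab
  simp only [pFun, apply_ite Fin.val] at h1
  have ha := a.isLt; have hb := b.isLt
  exact Fin.ext (by split_ifs at h1 <;> omega)

noncomputable def sigma (n : ℕ) : Equiv.Perm (Fin (2*n+1)) :=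
  Equiv.ofBijective (pFun n) (Finite.injective_iff_bijective.mp (pFun_inj n))

lemma BB_factor (hq : 1 < q) (hh : h ≤ n) :
    BB q n h = Matrix.diagonal (fun i : Fin (2*n+1) => (-q)^(-(n:ℤ)*((i:ℤ)+h-2*n))) *
      ((Matrix.vandermonde (Yrow q n h)).submatrix id (sigma n)) * Matrix.diagonal (dCol q n h) := by
  have hζ := neg_q_ne_zero hq
  ext i j
  rw [Matrix.mul_diagonal, Matrix.diagonal_mul, Matrix.submatrix_apply, Matrix.vandermonde_apply]
  have hσ : ((sigma n j : Fin (2*n+1)) : ℕ)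
      = if (j:ℕ) < n then 2*n - (j:ℕ) else if (j:ℕ) < 2*n then (j:ℕ) - n else n := by
    simp only [sigma, Equiv.ofBijective_apply, pFun, apply_ite Fin.val]
  by_cases hj1 : (j:ℕ) < n
  · simp only [BB, Matrix.of_apply, if_pos hj1, mEnt, dCol, hσ, Yrow, id_eq]
    rw [← zpow_natCast ((-q)^((i:ℤ)+(h:ℤ)-2*(n:ℤ))), ← zpow_mul]
    rw [← zpow_add₀ hζ, ← zpow_add₀ hζ]
    congr 1
    push_cast [Nat.cast_sub (by omega : (j:ℕ) ≤ 2*n)]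
    ring
  · by_cases hj2 : (j:ℕ) < 2*n
    · simp only [BB, Matrix.of_apply, if_neg hj1, if_pos hj2, nEnt, dCol, hσ, Yrow, id_eq]
      rw [← zpow_natCast ((-q)^((i:ℤ)+(h:ℤ)-2*(n:ℤ))), ← zpow_mul]
      rw [show ∀ (a b cc dd : ℝ), a * b * (cc * dd) = cc * (a * (b * dd)) from by intros; ring]
      congr 1
      rw [← zpow_add₀ hζ, ← zpow_add₀ hζ]
      congr 1
      push_cast [Nat.cast_sub (by omega : n ≤ (j:ℕ))]
      ring
    · simp only [BB, Matrix.of_apply, if_neg hj1, if_neg hj2, mEnt, dCol, hσ, Yrow, id_eq]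
      rw [← zpow_natCast ((-q)^((i:ℤ)+(h:ℤ)-2*(n:ℤ))), ← zpow_mul]
      rw [← zpow_add₀ hζ, ← zpow_add₀ hζ]
      congr 1
      push_cast
      ring

lemma Yrow_inj (hq : 1 < q) : Function.Injective (Yrow q n h) := by
  intro a b hab
  have := zpow_neg_q_inj hq hab
  exact Fin.ext (by omega)

lemma BB_isUnit (hq : 1 < q) (hh : h ≤ n) : IsUnit (BB q n h) := by
  have hζ := neg_q_ne_zero hq
  have hq0 : q ≠ 0 := by intro hc; rw [hc] at hq; norm_num at hq
  rw [Matrix.isUnit_iff_isUnit_det, isUnit_iff_ne_zero]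
  rw [BB_factor _ _ hq hh, Matrix.det_mul, Matrix.det_mul, Matrix.det_permute',
    Matrix.det_diagonal, Matrix.det_diagonal, Matrix.det_vandermonde]
  apply mul_ne_zero (mul_ne_zero ?_ (mul_ne_zero ?_ ?_)) ?_
  · exact Finset.prod_ne_zero_iff.mpr fun i _ => zpow_ne_zero _ hζ
  · simp only [Int.cast_ne_zero]
    exact_mod_cast (Equiv.Perm.sign (sigma n)).ne_zero
  · refine Finset.prod_ne_zero_iff.mpr fun i _ => Finset.prod_ne_zero_iff.mpr fun j hj => ?_
    refine sub_ne_zero_of_ne fun hc => ?_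
    have := Yrow_inj n h hq hc.symm
    simp only [Finset.mem_Ioi] at hj
    exact absurd this.symm (ne_of_gt hj)
  · refine Finset.prod_ne_zero_iff.mpr fun j _ => ?_
    unfold dCol
    split_ifs
    · exact zpow_ne_zero _ hζ
    · exact mul_ne_zero (zpow_ne_zero _ hq0) (zpow_ne_zero _ hζ)
    · exact zpow_ne_zero _ hζ

end Det

/- ===== the explicit value lemma for D ===== -/

noncomputable def DD (q : ℝ) (n : ℕ) (m : ℕ) : ℝ :=
  (Lagrange.basis (Finset.Icc 1 (2*n+1)) (xNode q n) m).derivative.eval 1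

lemma D_eq {q : ℝ} (hq : 1 < q) (n : ℕ) {j : ℕ} (hj1 : 1 ≤ j) (hj2 : j ≤ 2*n) :
    DD q n j =
      (∏ m ∈ (Finset.Icc 1 (2*n)).erase j, (1 - xNode q n m)) /
        (∏ m ∈ (Finset.Icc 1 (2*n+1)).erase j, (xNode q n m - xNode q n j)) := by
  have hv₀ : xNode q n (2*n+1) = 1 := by
    unfold xNode
    rw [if_neg (by omega), if_neg (by omega)]
  unfold DD
  rw [deriv_basis_eval_one (Finset.Icc 1 (2*n+1)) (xNode q n)
    (Finset.mem_Icc.mpr ⟨by omega, by omega⟩) hv₀ (by omega : j ≠ 2*n+1)]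
  congr 1
  · rw [Finset.erase_right_comm, Finset.Icc_erase_right, Finset.Ico_add_one_right_eq_Icc]
  · have hmem : j ∈ Finset.Icc 1 (2*n+1) := Finset.mem_Icc.mpr ⟨hj1, by omega⟩
    have hcard : ((Finset.Icc 1 (2*n+1)).erase j).card = 2*n := by
      rw [Finset.card_erase_of_mem hmem, Nat.card_Icc]
      omega
    have : ∀ m ∈ (Finset.Icc 1 (2*n+1)).erase j,
        xNode q n j - xNode q n m = -(xNode q n m - xNode q n j) := fun m _ => by ring
    rw [Finset.prod_congr rfl this]
    have hneg : ∏ x ∈ (Finset.Icc 1 (2*n+1)).erase j, -(xNode q n x - xNode q n j)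
        = (-1:ℝ)^(((Finset.Icc 1 (2*n+1)).erase j).card)
            * ∏ x ∈ (Finset.Icc 1 (2*n+1)).erase j, (xNode q n x - xNode q n j) := by
      rw [← Finset.prod_const, ← Finset.prod_mul_distrib]
      exact Finset.prod_congr rfl fun x _ => by ring
    rw [hneg, hcard]
    simp [pow_mul]


/- ===== the candidate solution ===== -/

noncomputable def cStar (q : ℝ) (n h : ℕ) : Fin (2*n+1) → ℝ := fun j =>
  if (j:ℕ)+1 ≤ 2*n then (alphaC q n h ((j:ℕ)+1))⁻¹ * DD q n ((j:ℕ)+1)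
  else DD q n (2*n+1) - (2*(n:ℝ) - (h:ℝ))

lemma cStar_term {q : ℝ} (hq : 1 < q) {n h : ℕ} (hn : 1 ≤ n) (hh : h ≤ n)
    (i j : Fin (2*n+1)) :
    BB q n h i j * cStar q n h j
      = (-q)^(-2*(n:ℤ)*(2*(n:ℤ)-(h:ℤ))) * (xNode q n ((j:ℕ)+1) ^ (i:ℕ) * DD q n ((j:ℕ)+1))
        + (if (j:ℕ) = 2*n then (-q)^(-2*(n:ℤ)*(2*(n:ℤ)-(h:ℤ))) * (-(2*(n:ℝ) - (h:ℝ))) else 0) := by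
  have hζ := neg_q_ne_zero hq
  by_cases hj1 : (j:ℕ) < n
  · rw [if_neg (by omega), add_zero]
    simp only [BB, Matrix.of_apply, if_pos hj1, cStar, if_pos (by omega : (j:ℕ)+1 ≤ 2*n)]
    have hcoef : mEnt q n h ((i:ℕ)+1) (j:ℕ) * (alphaC q n h ((j:ℕ)+1))⁻¹
        = (-q)^(-2*(n:ℤ)*(2*(n:ℤ)-(h:ℤ))) * xNode q n ((j:ℕ)+1) ^ (i:ℕ) := by
      have hx : xNode q n ((j:ℕ)+1) = (-q) ^ ((n:ℤ) + 1 - ((((j:ℕ)+1) : ℕ) : ℤ)) := by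
        unfold xNode; rw [if_pos (by omega : (j:ℕ)+1 ≤ n)]
      have ha : alphaC q n h ((j:ℕ)+1)
          = (-q) ^ (((n:ℤ) + 1 - ((((j:ℕ)+1) : ℕ) : ℤ)) * (2*(n:ℤ) - (h:ℤ))) := by
        unfold alphaC; rw [if_pos (by omega : (j:ℕ)+1 ≤ n)]
      unfold mEnt
      rw [hx, ha]
      rw [← zpow_natCast ((-q) ^ ((n:ℤ) + 1 - ((((j:ℕ)+1):ℕ):ℤ))), ← zpow_mul, ← zpow_neg,
        ← zpow_add₀ hζ, ← zpow_add₀ hζ]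
      congr 1
      push_cast
      ring
    calc mEnt q n h ((i:ℕ)+1) (j:ℕ) * ((alphaC q n h ((j:ℕ)+1))⁻¹ * DD q n ((j:ℕ)+1))
        = (mEnt q n h ((i:ℕ)+1) (j:ℕ) * (alphaC q n h ((j:ℕ)+1))⁻¹) * DD q n ((j:ℕ)+1) := by
          ring
      _ = _ := by rw [hcoef]; ring
  · by_cases hj2 : (j:ℕ) < 2*n
    · rw [if_neg (by omega), add_zero]
      simp only [BB, Matrix.of_apply, if_neg hj1, if_pos hj2, cStar,
        if_pos (by omega : (j:ℕ)+1 ≤ 2*n)]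
      have hcoef : nEnt q n h ((i:ℕ)+1) ((j:ℕ)-n) * (alphaC q n h ((j:ℕ)+1))⁻¹
          = (-q)^(-2*(n:ℤ)*(2*(n:ℤ)-(h:ℤ))) * xNode q n ((j:ℕ)+1) ^ (i:ℕ) := by
        have hx : xNode q n ((j:ℕ)+1) = (-q) ^ (((((j:ℕ)+1) : ℕ) : ℤ) - 2*(n:ℤ) - 1) := by
          unfold xNode
          rw [if_neg (by omega : ¬ ((j:ℕ)+1 ≤ n)), if_pos (by omega : (j:ℕ)+1 ≤ 2*n)]
        have ha : alphaC q n h ((j:ℕ)+1)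
            = (-q) ^ ((2*(n:ℤ) + 1 - ((((j:ℕ)+1) : ℕ) : ℤ)) * (2*(n:ℤ) + (h:ℤ))) := by
          unfold alphaC
          rw [if_neg (by omega : ¬ ((j:ℕ)+1 ≤ n)), if_pos (by omega : (j:ℕ)+1 ≤ 2*n)]
        unfold nEnt
        rw [hx, ha]
        have hF : (-(2*(n:ℤ)-(h:ℤ))^2 + (h:ℤ)^2) = 2 * (2*(n:ℤ)*(h:ℤ) - 2*(n:ℤ)^2) := by ring
        rw [hF, q_zpow_even hq]
        rw [← zpow_natCast ((-q) ^ (((((j:ℕ)+1):ℕ):ℤ) - 2*(n:ℤ) - 1)), ← zpow_mul, ← zpow_neg,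
          ← zpow_add₀ hζ, ← zpow_add₀ hζ, ← zpow_add₀ hζ]
        congr 1
        push_cast [Nat.cast_sub (by omega : n ≤ (j:ℕ))]
        ring
      calc nEnt q n h ((i:ℕ)+1) ((j:ℕ)-n) * ((alphaC q n h ((j:ℕ)+1))⁻¹ * DD q n ((j:ℕ)+1))
          = (nEnt q n h ((i:ℕ)+1) ((j:ℕ)-n) * (alphaC q n h ((j:ℕ)+1))⁻¹) * DD q n ((j:ℕ)+1) := by
            ring
        _ = _ := by rw [hcoef]; ring
    · have hj : (j:ℕ) = 2*n := by have := j.isLt; omega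
      rw [if_pos hj]
      simp only [BB, Matrix.of_apply, if_neg hj1, if_neg hj2, cStar]
      rw [hj, if_neg (by omega : ¬ (2*n+1 ≤ 2*n))]
      have h1 : mEnt q n h ((i:ℕ)+1) n = (-q)^(-2*(n:ℤ)*(2*(n:ℤ)-(h:ℤ))) := by
        unfold mEnt; congr 1; ring
      have h2 : xNode q n (2*n+1) = 1 := by
        unfold xNode
        rw [if_neg (by omega), if_neg (by omega)]
      rw [h1, h2, one_pow]
      ring

lemma key_mulVec {q : ℝ} (hq : 1 < q) {n h : ℕ} (hn : 1 ≤ n) (hh : h ≤ n) :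
    (BB q n h).mulVec (cStar q n h) =
      (fun j : Fin (2 * n + 1) => (-q) ^ (-2 * (n : ℤ) * (2 * (n : ℤ) - (h : ℤ))) *
        (((j : ℕ) : ℝ) + 1 - (2 * (n : ℝ) - (h : ℝ) + 1))) := by
  funext i
  simp only [Matrix.mulVec, dotProduct]
  rw [Finset.sum_congr rfl (fun j _ => cStar_term hq hn hh i j), Finset.sum_add_distrib]
  have hs2 : ∑ j : Fin (2*n+1),
      (if (j:ℕ) = 2*n then (-q)^(-2*(n:ℤ)*(2*(n:ℤ)-(h:ℤ))) * (-(2*(n:ℝ) - (h:ℝ))) else 0)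
      = (-q)^(-2*(n:ℤ)*(2*(n:ℤ)-(h:ℤ))) * (-(2*(n:ℝ) - (h:ℝ))) := by
    rw [Fin.sum_univ_eq_sum_range
      (fun k => if k = 2*n then (-q)^(-2*(n:ℤ)*(2*(n:ℤ)-(h:ℤ))) * (-(2*(n:ℝ) - (h:ℝ))) else 0)
      (2*n+1)]
    rw [Finset.sum_ite_eq' (Finset.range (2*n+1)) (2*n)
      (fun _ => (-q)^(-2*(n:ℤ)*(2*(n:ℤ)-(h:ℤ))) * (-(2*(n:ℝ) - (h:ℝ))))]
    rw [if_pos (Finset.mem_range.mpr (by omega))]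
  have hs1 : ∑ j : Fin (2*n+1),
      (-q)^(-2*(n:ℤ)*(2*(n:ℤ)-(h:ℤ))) * (xNode q n ((j:ℕ)+1) ^ (i:ℕ) * DD q n ((j:ℕ)+1))
      = (-q)^(-2*(n:ℤ)*(2*(n:ℤ)-(h:ℤ))) * ((i:ℕ) : ℝ) := by
    rw [← Finset.mul_sum]
    congr 1
    rw [Fin.sum_univ_eq_sum_range (fun k => xNode q n (k+1) ^ (i:ℕ) * DD q n (k+1)) (2*n+1)]
    have hmain := sum_pow_mul_deriv (Finset.Icc 1 (2*n+1)) (xNode q n) (xNode_injOn hq n)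
      (i:ℕ) (by rw [Nat.card_Icc]; omega)
    calc ∑ k ∈ Finset.range (2*n+1), xNode q n (k+1) ^ (i:ℕ) * DD q n (k+1)
        = ∑ m ∈ Finset.Icc 1 (2*n+1), xNode q n m ^ (i:ℕ) * DD q n m := by
          rw [← Finset.Ico_add_one_right_eq_Icc, Finset.sum_Ico_eq_sum_range]
          refine Finset.sum_congr (by norm_num) fun k _ => by rw [Nat.add_comm 1 k]
      _ = ((i:ℕ) : ℝ) := by unfold DD; exact hmain
  rw [hs1, hs2]
  push_cast
  ring

theorem stmt0 (q : ℝ) (hq : 1 < q) (n h : ℕ) (hn : 1 ≤ n) (hh : h ≤ n) :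
    IsUnit (BB q n h) ∧
    ∀ c : Fin (2 * n + 1) → ℝ,
      (BB q n h).mulVec c =
        (fun j : Fin (2 * n + 1) => (-q) ^ (-2 * (n : ℤ) * (2 * (n : ℤ) - (h : ℤ))) *
          (((j : ℕ) : ℝ) + 1 - (2 * (n : ℝ) - (h : ℝ) + 1))) →
      ∀ i : Fin (2 * n + 1), (i : ℕ) + 1 ≤ 2 * n →
        c i = (alphaC q n h ((i : ℕ) + 1))⁻¹ *
          ((∏ m ∈ (Finset.Icc 1 (2 * n)).erase ((i : ℕ) + 1), (1 - xNode q n m)) /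
            (∏ m ∈ (Finset.Icc 1 (2 * n + 1)).erase ((i : ℕ) + 1),
              (xNode q n m - xNode q n ((i : ℕ) + 1)))) := by
  refine ⟨BB_isUnit n h hq hh, ?_⟩
  intro c hc i hi
  have hcc : c = cStar q n h :=
    (Matrix.mulVec_injective_iff_isUnit.mpr (BB_isUnit n h hq hh))
      (hc.trans (key_mulVec hq hn hh).symm)
  rw [hcc]
  show (if (i:ℕ)+1 ≤ 2*n then (alphaC q n h ((i:ℕ)+1))⁻¹ * DD q n ((i:ℕ)+1)
    else DD q n (2*n+1) - (2*(n:ℝ) - (h:ℝ))) = _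
  rw [if_pos hi, D_eq hq n (by omega) (by omega)]
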